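/- arXiv:2605.21160 — 3 statements merged into one kernel-verified Lean document; each statement's English description precedes it below -/
import Mathlib

section
/- Let n, m be positive integers with 1 ≤ m ≤ n. Let D ⊆ ℝ × ℝ^(n−m) × ℝ^m be an open set, let V : D → ℝ^m be differentiable on D, and suppose that at every point p ∈ D the partial Fréchet derivative J_b(p) := (D_{x_b}V)(p) : ℝ^m → ℝ^m is a linear isomorphism. Let f_a : D → ℝ^(n−m) be any function, and define f_b : D → ℝ^m by f_b(p) := − J_b(p)⁻¹ ( (D_{x_a}V)(p)(f_a(p)) + ∂V/∂t (p) ). Then at every p ∈ D the identity ∂V/∂t (p) + (D_{x_a}V)(p)(f_a(p)) + J_b(p)(f_b(p)) = 0 holds, and consequently for every differentiable curve (a, b) : I → ℝ^(n−m) × ℝ^m on an interval I with graph in D satisfying a' = f_a(t, a, b) and b' = f_b(t, a, b), the function t ↦ V(t, a(t), b(t)) is constant on I. -/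
/-- **Backward generation via the explicit inversion formula.**
Let `V : D → ℝ^m` be differentiable on the open set `D ⊆ ℝ × ℝ^(n-m) × ℝ^m`, with full
Fréchet derivative `DV p` at every `p ∈ D`, and suppose the partial derivative in the
`x_b`-variables is a continuous linear isomorphism `Jb p` (i.e. `Jb p v = DV p (0, 0, v)`).
Given any `fa`, define `fb p := - (Jb p)⁻¹ ((D_{x_a}V)(p)(fa p) + ∂V/∂t (p))`.
Then the linear identity `∂V/∂t + (D_{x_a}V)(fa) + Jb (fb) = 0` holds at every point of `D`,
and consequently `t ↦ V (t, a t, b t)` is constant along every differentiable solution curve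
`(a, b)` of the assembled system on an interval `I` whose graph lies in `D`. -/
theorem backward_generation_inversion_formula
    (n m : ℕ) (hm : 1 ≤ m) (hmn : m ≤ n)
    (D : Set (ℝ × (Fin (n - m) → ℝ) × (Fin m → ℝ))) (hD : IsOpen D)
    (V : ℝ × (Fin (n - m) → ℝ) × (Fin m → ℝ) → (Fin m → ℝ))
    (DV : ℝ × (Fin (n - m) → ℝ) × (Fin m → ℝ) →
      (ℝ × (Fin (n - m) → ℝ) × (Fin m → ℝ)) →L[ℝ] (Fin m → ℝ))
    (hV : ∀ p ∈ D, HasFDerivAt V (DV p) p)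
    (Jb : ℝ × (Fin (n - m) → ℝ) × (Fin m → ℝ) → (Fin m → ℝ) ≃L[ℝ] (Fin m → ℝ))
    (hJb : ∀ p ∈ D, ∀ v : Fin m → ℝ, Jb p v = DV p (0, 0, v))
    (fa : ℝ × (Fin (n - m) → ℝ) × (Fin m → ℝ) → (Fin (n - m) → ℝ))
    (fb : ℝ × (Fin (n - m) → ℝ) × (Fin m → ℝ) → (Fin m → ℝ))
    (hfb : ∀ p ∈ D,
      fb p = - (Jb p).symm (DV p (0, fa p, 0) + DV p (1, 0, 0))) :
    (∀ p ∈ D, DV p (1, 0, 0) + DV p (0, fa p, 0) + Jb p (fb p) = 0) ∧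
    (∀ I : Set ℝ, I.OrdConnected →
      ∀ (a : ℝ → (Fin (n - m) → ℝ)) (b : ℝ → (Fin m → ℝ)),
      (∀ t ∈ I, (t, a t, b t) ∈ D) →
      (∀ t ∈ I, HasDerivAt a (fa (t, a t, b t)) t) →
      (∀ t ∈ I, HasDerivAt b (fb (t, a t, b t)) t) →
      ∀ s ∈ I, ∀ t ∈ I, V (t, a t, b t) = V (s, a s, b s)) := by

  have key : ∀ p ∈ D, DV p (1, 0, 0) + DV p (0, fa p, 0) + Jb p (fb p) = 0 := by
    intro p hp
    rw [hfb p hp, map_neg, (Jb p).apply_symm_apply]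
    abel
  refine ⟨key, ?_⟩
  intro I hI a b hmem ha hb s hs t ht
  set g : ℝ → (Fin m → ℝ) := fun t => V (t, a t, b t) with hg
  have hderiv : ∀ u ∈ I, HasDerivAt g 0 u := by
    intro u hu
    have hp := hmem u hu
    have hcurve : HasDerivAt (fun t => ((t : ℝ), a t, b t))
        ((1 : ℝ), fa (u, a u, b u), fb (u, a u, b u)) u :=
      HasDerivAt.prodMk (hasDerivAt_id u) (HasDerivAt.prodMk (ha u hu) (hb u hu))
    have hcomp := (hV _ hp).comp_hasDerivAt u hcurve
    have : DV (u, a u, b u) (1, fa (u, a u, b u), fb (u, a u, b u)) = 0 := by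
      have hsplit : ((1 : ℝ), fa (u, a u, b u), fb (u, a u, b u))
          = ((1 : ℝ), 0, 0) + ((0 : ℝ), fa (u, a u, b u), 0)
            + ((0 : ℝ), 0, fb (u, a u, b u)) := by
        simp [Prod.ext_iff]
      rw [hsplit, map_add, map_add, ← hJb _ hp]
      exact key _ hp
    rwa [this] at hcomp
  have hconv : Convex ℝ I := hI.convex
  have := hconv.norm_image_sub_le_of_norm_hasDerivWithin_le (C := 0)
    (fun u hu => (hderiv u hu).hasDerivWithinAt)
    (fun u hu => by simp) hs ht
  have : ‖g t - g s‖ ≤ 0 := by simpa using this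
  have : g t - g s = 0 := by
    simpa using norm_le_zero_iff.mp this
  exact sub_eq_zero.mp this
end

section
/- Let I ⊆ ℝ be an interval and let x, y : I → ℝ be differentiable functions such that x(t) − y(t) > 0, t ≠ 0, and 2 x(t) + 3 ≠ 0 for all t ∈ I, and such that x'(t) = 2 (x(t) − y(t)) · log(x(t) − y(t)) / (2 t x(t) + 3 t) and y'(t) = (−2 x(t)² + 2 x(t) y(t) − x(t) + y(t)) · log(x(t) − y(t)) / (2 t x(t) + 3 t) for all t ∈ I. Then the function t ↦ log(x(t) − y(t)) / t is constant on I. -/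
/-- **First integral `V₂ = log (x - y) / t` of a non-autonomous logarithmic system.**
If on an interval `I` we have `x t - y t > 0`, `t ≠ 0` and `2 x t + 3 ≠ 0`, and
`x' = 2 (x - y) log (x - y) / (2 t x + 3 t)`,
`y' = (-2 x² + 2 x y - x + y) log (x - y) / (2 t x + 3 t)`,
then `t ↦ log (x t - y t) / t` is constant on `I`. -/
theorem logarithmic_system_first_integral_two
    (I : Set ℝ) (hI : I.OrdConnected)
    (x y : ℝ → ℝ)
    (hpos : ∀ t ∈ I, x t - y t > 0)
    (ht : ∀ t ∈ I, t ≠ 0)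
    (hx3 : ∀ t ∈ I, 2 * x t + 3 ≠ 0)
    (hx : ∀ t ∈ I, HasDerivAt x
      (2 * (x t - y t) * Real.log (x t - y t) / (2 * t * x t + 3 * t)) t)
    (hy : ∀ t ∈ I, HasDerivAt y
      ((-2 * x t ^ 2 + 2 * x t * y t - x t + y t) * Real.log (x t - y t)
        / (2 * t * x t + 3 * t)) t) :
    ∀ s ∈ I, ∀ t ∈ I, Real.log (x t - y t) / t = Real.log (x s - y s) / s := by
  have hconv : Convex ℝ I := hI.convex
  have key : ∀ t ∈ I, HasDerivAt (fun t => Real.log (x t - y t) / t) 0 t := by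
    intro t htI
    have hne : x t - y t ≠ 0 := ne_of_gt (hpos t htI)
    have ht0 := ht t htI
    have h3 := hx3 t htI
    have hden : 2 * t * x t + 3 * t ≠ 0 := by
      have : 2 * t * x t + 3 * t = t * (2 * x t + 3) := by ring
      rw [this]; exact mul_ne_zero ht0 h3
    have hsub := (hx t htI).sub (hy t htI)
    have hlog := (Real.hasDerivAt_log hne).comp t hsub
    have hid : HasDerivAt (fun s : ℝ => s) 1 t := hasDerivAt_id t
    have hdiv : HasDerivAt (fun t => Real.log (x t - y t) / t) _ t := hlog.div hid ht0
    convert hdiv using 1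
    simp only [Function.comp_apply, Pi.sub_apply]
    rw [show 2 * t * x t + 3 * t = t * (2 * x t + 3) by ring]
    field_simp
    have e : ((x t - y t) * 2 - (x t * (2 * (-x t + y t) - 1) + y t)) / (x t * 2 + 3) = x t - y t := by
      rw [div_eq_iff (by rwa [mul_comm])]; ring
    rw [e]
    ring
  intro s hs t htI
  have hb := hconv.norm_image_sub_le_of_norm_hasDerivWithin_le
    (f := fun t => Real.log (x t - y t) / t) (f' := fun _ => (0:ℝ)) (C := 0)
    (fun u hu => (key u hu).hasDerivWithinAt) (fun u _ => by simp) hs htI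
  have h0 : Real.log (x t - y t) / t - Real.log (x s - y s) / s = 0 := by
    simpa using hb
  linarith
end

section
/- Let I ⊆ ℝ be an interval and let x, y : I → ℝ be differentiable functions such that 2 t + 2 x(t) + 5 > 0 for all t ∈ I, and such that x'(t) = y(t) and y'(t) = (9 t + 9 x(t) + 7) / (2 t + 2 x(t) + 5) for all t ∈ I. Then the function t ↦ (1/2) y(t)² + y(t) − (9/2) (t + x(t)) + (31/4) · log(2 t + 2 x(t) + 5) is constant on I. -/
lemma first_integral_deriv
    (x y : ℝ → ℝ) (t : ℝ)
    (hpos : 2 * t + 2 * x t + 5 > 0)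
    (hx : HasDerivAt x (y t) t)
    (hy : HasDerivAt y ((9 * t + 9 * x t + 7) / (2 * t + 2 * x t + 5)) t) :
    HasDerivAt (fun t => (1 / 2) * y t ^ 2 + y t - (9 / 2) * (t + x t)
      + (31 / 4) * Real.log (2 * t + 2 * x t + 5)) 0 t := by
  have hu : HasDerivAt (fun t => 2 * t + 2 * x t + 5) (2 + 2 * y t) t := by
    simpa using (((hasDerivAt_id t).const_mul 2).add (hx.const_mul 2)).add_const 5
  have hlog := (Real.hasDerivAt_log (ne_of_gt hpos)).comp t hu
  have h := ((((hy.pow 2).const_mul (1/2 : ℝ)).add hy).sub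
      (((hasDerivAt_id t).add hx).const_mul (9/2 : ℝ))).add (hlog.const_mul (31/4 : ℝ))
  refine h.congr_deriv ?_
  have h0 : 2 * t + 2 * x t + 5 ≠ 0 := ne_of_gt hpos
  linear_combination (9 / 2) * (1 + y t) * inv_mul_cancel₀ h0

/-- **Energy-type first integral of the traveling-wave system.**
If on an interval `I` we have `2 t + 2 x t + 5 > 0`, `x' = y` and
`y' = (9 t + 9 x + 7) / (2 t + 2 x + 5)`, then
`t ↦ (1/2) y² + y - (9/2)(t + x) + (31/4) log (2 t + 2 x + 5)` is constant on `I`. -/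
theorem traveling_wave_system_first_integral
    (I : Set ℝ) (hI : I.OrdConnected)
    (x y : ℝ → ℝ)
    (hpos : ∀ t ∈ I, 2 * t + 2 * x t + 5 > 0)
    (hx : ∀ t ∈ I, HasDerivAt x (y t) t)
    (hy : ∀ t ∈ I, HasDerivAt y
      ((9 * t + 9 * x t + 7) / (2 * t + 2 * x t + 5)) t) :
    ∀ s ∈ I, ∀ t ∈ I,
      (1 / 2) * y t ^ 2 + y t - (9 / 2) * (t + x t)
          + (31 / 4) * Real.log (2 * t + 2 * x t + 5)
        = (1 / 2) * y s ^ 2 + y s - (9 / 2) * (s + x s)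
          + (31 / 4) * Real.log (2 * s + 2 * x s + 5) := by
  set V : ℝ → ℝ := fun t => (1 / 2) * y t ^ 2 + y t - (9 / 2) * (t + x t)
      + (31 / 4) * Real.log (2 * t + 2 * x t + 5) with hV
  have key : ∀ a ∈ I, ∀ b ∈ I, a ≤ b → V b = V a := by
    intro a ha b hb hab
    have hsub : Set.Icc a b ⊆ I := hI.out ha hb
    have hcont : ContinuousOn V (Set.Icc a b) := fun u hu =>
      (first_integral_deriv x y u (hpos u (hsub hu)) (hx u (hsub hu))
        (hy u (hsub hu))).continuousAt.continuousWithinAt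
    have hderiv : ∀ u ∈ Set.Ico a b, HasDerivWithinAt V 0 (Set.Ici u) u := by
      intro u hu
      exact (first_integral_deriv x y u (hpos u (hsub (Set.Ico_subset_Icc_self hu)))
        (hx u (hsub (Set.Ico_subset_Icc_self hu)))
        (hy u (hsub (Set.Ico_subset_Icc_self hu)))).hasDerivWithinAt
    exact constant_of_has_deriv_right_zero hcont hderiv b (Set.right_mem_Icc.mpr hab)
  intro s hs t ht
  rcases le_total s t with h | h
  · exact key s hs t ht h
  · exact (key t ht s hs h).symm
end
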